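/- Let σ be a Frobenius splitting of a commutative ring R of prime characteristic p and let I be an ideal of R compatibly split under σ. Then every minimal prime ideal of R over I is compatibly split under σ. -/

import Mathlib

/-- If `P` is a minimal prime over `I` and `a ∈ P`, then some multiple `s * a ^ n`
with `s ∉ P` lies in `I`. -/
lemma aux_exists_mul_pow_mem {R : Type*} [CommRing R] {I P : Ideal R}
    (hP : P ∈ I.minimalPrimes) {a : R} (ha : a ∈ P) :
    ∃ n : ℕ, ∃ s : R, s ∉ P ∧ s * a ^ n ∈ I := by
  haveI hPp : P.IsPrime := hP.1.1
  by_contra hcon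
  push_neg at hcon
  -- the multiplicative set of elements `s * a ^ n` with `s ∉ P`
  set S : Submonoid R :=
    { carrier := {x | ∃ n : ℕ, ∃ s : R, s ∉ P ∧ x = s * a ^ n}
      mul_mem' := by
        rintro x y ⟨n, s, hs, rfl⟩ ⟨m, t, ht, rfl⟩
        refine ⟨n + m, s * t, fun h => ?_, by ring⟩
        rcases hPp.mem_or_mem h with h | h
        · exact hs h
        · exact ht h
      one_mem' := ⟨0, 1, (fun h => hPp.ne_top (P.eq_top_of_isUnit_mem h isUnit_one)), by ring⟩ } with hS
  have hdisj : Disjoint (I : Set R) (S : Set R) := by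
    rw [Set.disjoint_left]
    rintro x hxI ⟨n, s, hs, rfl⟩
    exact hs ((hcon n s hs) hxI).elim
  obtain ⟨Q, hQp, hIQ, hQdisj⟩ := Ideal.exists_le_prime_disjoint I S hdisj
  have hQP : Q ≤ P := by
    intro x hx
    by_contra hxP
    exact Set.disjoint_left.mp hQdisj hx ⟨0, x, hxP, by ring⟩
  have hPQ : P ≤ Q := hP.2 ⟨hQp, hIQ⟩ hQP
  have haQ : a ∈ Q := hPQ ha
  exact Set.disjoint_left.mp hQdisj haQ ⟨1, 1, (fun h => hPp.ne_top (P.eq_top_of_isUnit_mem h isUnit_one)), by ring⟩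

/-- Let `σ` be a Frobenius splitting of a commutative ring `R` of prime characteristic `p`,
and let `I` be an ideal of `R` compatibly split under `σ`. Then every minimal prime
of `R` over `I` is compatibly split under `σ`. -/
theorem minimal_primes_compatibly_split
    {R : Type*} [CommRing R] (p : ℕ) (hp : p.Prime) [CharP R p]
    (σ : R → R)
    (hadd : ∀ a b : R, σ (a + b) = σ a + σ b)
    (hsemilin : ∀ a b : R, σ (a ^ p * b) = a * σ b)
    (hone : σ 1 = 1)
    (I : Ideal R) (hI : ∀ a ∈ I, σ a ∈ I) :
    ∀ P ∈ I.minimalPrimes, ∀ a ∈ P, σ a ∈ P := by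
  intro P hP a ha
  haveI hPp : P.IsPrime := hP.1.1
  -- key descent lemma: if `s * x ^ p ∈ I` then `s * x ∈ I`
  have descend : ∀ s x : R, s * x ^ p ∈ I → s * x ∈ I := by
    intro s x hsx
    have h1 : (s * x) ^ p * 1 ∈ I := by
      have : (s * x) ^ p * 1 = s ^ (p - 1) * (s * x ^ p) := by
        rw [mul_one, mul_pow]
        have : s ^ p = s ^ (p - 1) * s := by
          rw [← pow_succ, Nat.sub_add_cancel hp.one_le]
        rw [this]; ring
      rw [this]
      exact I.mul_mem_left _ hsx
    have := hI _ h1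
    rwa [hsemilin, hone, mul_one] at this
  obtain ⟨n, s, hs, hsa⟩ := aux_exists_mul_pow_mem hP ha
  -- bump the exponent up to `p ^ n`
  have hsn : s * a ^ p ^ n ∈ I := by
    have hle : n ≤ p ^ n := Nat.le_of_lt (Nat.lt_pow_self (n := n) hp.one_lt)
    have : s * a ^ p ^ n = (s * a ^ n) * a ^ (p ^ n - n) := by
      rw [mul_assoc, ← pow_add, Nat.add_sub_cancel' hle]
    rw [this]
    exact I.mul_mem_right _ hsa
  -- descend to `s * a ∈ I`
  have hsa1 : s * a ∈ I := by
    clear hsa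
    induction n with
    | zero => simpa using hsn
    | succ k ih =>
      apply ih
      have : s * (a ^ p ^ k) ^ p ∈ I := by
        rw [← pow_mul, ← pow_succ]; exact hsn
      have := descend s (a ^ p ^ k) this
      exact this
  -- conclude: `σ (s ^ p * a) = s * σ a ∈ I ⊆ P`
  have hspa : s ^ p * a ∈ I := by
    have : s ^ p * a = s ^ (p - 1) * (s * a) := by
      have : s ^ p = s ^ (p - 1) * s := by
        rw [← pow_succ, Nat.sub_add_cancel hp.one_le]
      rw [this]; ring
    rw [this]
    exact I.mul_mem_left _ hsa1
  have hfin : s * σ a ∈ P := hP.1.2 (by rw [← hsemilin s a]; exact hI _ hspa)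
  rcases hPp.mem_or_mem hfin with h | h
  · exact (hs h).elim
  · exact h
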